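/- If 0 < 2γ² < 1 and the learning rates are α_t = a/(t+1) for some a > 0, then there exists a constant D > 0 such that for all t ≥ 1, ∑_{k=1}^{t} (2γ²)^k · α_{t-k}²/α_t ≤ D. -/

import Mathlib

/-- The learning-rate condition of the non-convex convergence theorem holds
for `α_t = a/(t+1)`: if `0 < 2γ² < 1` and `a > 0`, there is a constant
`D > 0` with `∑_{k=1}^{t} (2γ²)^k * α_{t-k}² / α_t ≤ D` for all `t ≥ 1`. -/
theorem learning_rate_condition (γ a : ℝ) (hγ0 : 0 < 2 * γ ^ 2)
    (hγ1 : 2 * γ ^ 2 < 1) (ha : 0 < a) (α : ℕ → ℝ)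
    (hα : ∀ t, α t = a / (t + 1)) :
    ∃ D : ℝ, 0 < D ∧ ∀ t : ℕ, 1 ≤ t →
      ∑ k ∈ Finset.Icc 1 t, (2 * γ ^ 2) ^ k * (α (t - k)) ^ 2 / α t ≤ D := by
  set q : ℝ := 2 * γ ^ 2 with hq
  have hq0 : 0 ≤ q := le_of_lt hγ0
  have hqlt : ‖q‖ < 1 := by rw [Real.norm_eq_abs, abs_of_nonneg hq0]; exact hγ1
  have hsum : Summable (fun k : ℕ => ((k : ℝ) + 1) ^ 2 * q ^ k) := by
    have h2 := summable_pow_mul_geometric_of_norm_lt_one (R := ℝ) 2 hqlt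
    have h1 := summable_pow_mul_geometric_of_norm_lt_one (R := ℝ) 1 hqlt
    have h0 := summable_geometric_of_norm_lt_one (x := q) hqlt
    have := (h2.add ((h1.mul_left 2).add h0))
    refine this.congr fun k => ?_
    ring
  set T : ℝ := ∑' k : ℕ, ((k : ℝ) + 1) ^ 2 * q ^ k with hT
  have hT0 : 0 ≤ T := tsum_nonneg fun k => by positivity
  refine ⟨a * T + 1, by positivity, fun t ht => ?_⟩
  have hstep : ∀ k ∈ Finset.Icc 1 t,
      q ^ k * (α (t - k)) ^ 2 / α t ≤ a * (((k : ℝ) + 1) ^ 2 * q ^ k) := by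
    intro k hk
    simp only [Finset.mem_Icc] at hk
    have hkt : k ≤ t := hk.2
    have hcast : ((t - k : ℕ) : ℝ) = (t : ℝ) - k := by
      push_cast [Nat.cast_sub hkt]; ring
    rw [hα, hα, hcast]
    set m : ℝ := (t : ℝ) - k with hm
    have hm0 : 0 ≤ m := by
      rw [hm]; have : (k : ℝ) ≤ t := by exact_mod_cast hkt
      linarith
    have hk0 : (0 : ℝ) ≤ k := Nat.cast_nonneg k
    have hmp : (0 : ℝ) < m + 1 := by linarith
    have htp : (0 : ℝ) < (t : ℝ) + 1 := by positivity
    have hqk : (0 : ℝ) ≤ q ^ k := pow_nonneg hq0 k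
    have hexpand : q ^ k * (a / (m + 1)) ^ 2 / (a / ((t : ℝ) + 1))
        = q ^ k * a * (((t : ℝ) + 1) / (m + 1) ^ 2) := by
      field_simp
    rw [hexpand]
    have hkey : ((t : ℝ) + 1) / (m + 1) ^ 2 ≤ ((k : ℝ) + 1) ^ 2 := by
      rw [div_le_iff₀ (by positivity)]
      have htm : (t : ℝ) = m + k := by rw [hm]; ring
      rw [htm]
      nlinarith [sq_nonneg (m * k), sq_nonneg m, sq_nonneg k, mul_nonneg hm0 hk0]
    calc q ^ k * a * (((t : ℝ) + 1) / (m + 1) ^ 2)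
        ≤ q ^ k * a * ((k : ℝ) + 1) ^ 2 := by
          apply mul_le_mul_of_nonneg_left hkey (by positivity)
      _ = a * (((k : ℝ) + 1) ^ 2 * q ^ k) := by ring
  calc ∑ k ∈ Finset.Icc 1 t, q ^ k * (α (t - k)) ^ 2 / α t
      ≤ ∑ k ∈ Finset.Icc 1 t, a * (((k : ℝ) + 1) ^ 2 * q ^ k) :=
        Finset.sum_le_sum hstep
    _ = a * ∑ k ∈ Finset.Icc 1 t, ((k : ℝ) + 1) ^ 2 * q ^ k := by
        rw [Finset.mul_sum]
    _ ≤ a * T := by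
        apply mul_le_mul_of_nonneg_left _ (le_of_lt ha)
        exact Summable.sum_le_tsum _ (fun k _ => by positivity) hsum
    _ ≤ a * T + 1 := by linarith
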